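/- For every n > 0, the function f(x) = [ (2(n+1))/(n(n+2)) · cos²( n·x / (2(n+1)) ) ]^{1/n}, defined for |x| < π(n+1)/n, satisfies the ordinary differential equation (f^{n+1})''(x) + f(x)^{n+1} = (1/n)·f(x) at every x in the open interval (−π(n+1)/n, π(n+1)/n). -/

import Mathlib

/-- For every `n > 0`, the Zmitrenko–Kurdyumov compacton profile
`f(x) = [ (2(n+1))/(n(n+2)) · cos²( n·x / (2(n+1)) ) ]^{1/n}` satisfies
`(f^{n+1})'' + f^{n+1} = (1/n)·f` at every `x` with `|x| < π(n+1)/n`. -/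
theorem stmt0 (n : ℝ) (hn : 0 < n) (x : ℝ)
    (hx : |x| < Real.pi * (n + 1) / n) :
    deriv (deriv (fun y : ℝ =>
        ((2 * (n + 1) / (n * (n + 2)) * (Real.cos (n * y / (2 * (n + 1)))) ^ 2)
          ^ (1 / n)) ^ (n + 1))) x
      + ((2 * (n + 1) / (n * (n + 2)) * (Real.cos (n * x / (2 * (n + 1)))) ^ 2)
          ^ (1 / n)) ^ (n + 1)
      = (1 / n) *
        ((2 * (n + 1) / (n * (n + 2)) * (Real.cos (n * x / (2 * (n + 1)))) ^ 2)
          ^ (1 / n)) := by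
  have hn' : n ≠ 0 := ne_of_gt hn
  have hn1 : (0:ℝ) < n + 1 := by linarith
  have hn2 : (0:ℝ) < n + 2 := by linarith
  set a : ℝ := n / (2 * (n + 1)) with ha
  set c : ℝ := 2 * (n + 1) / (n * (n + 2)) with hc
  set q : ℝ := 1 / n * (n + 1) with hq
  have hapos : 0 < a := div_pos hn (by linarith)
  have hcpos : 0 < c := div_pos (by linarith) (by positivity)
  set b : ℝ := Real.pi * (n + 1) / n with hb
  have hab : a * b = Real.pi / 2 := by rw [ha, hb]; field_simp
  have hxmem : x ∈ Set.Ioo (-b) b := by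
    rcases abs_lt.mp hx with ⟨h1, h2⟩; exact ⟨h1, h2⟩
  have harg : ∀ y : ℝ, n * y / (2 * (n + 1)) = a * y := by
    intro y; rw [ha]; ring
  rw [harg x]
  set h : ℝ → ℝ := fun y => c * Real.cos (a * y) ^ 2 with hh
  have hcos : ∀ y ∈ Set.Ioo (-b) b, 0 < Real.cos (a * y) := by
    intro y hy
    apply Real.cos_pos_of_mem_Ioo
    constructor
    · have := mul_lt_mul_of_pos_left hy.1 hapos
      rw [mul_neg, hab] at this; linarith
    · have := mul_lt_mul_of_pos_left hy.2 hapos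
      rw [hab] at this; linarith
  have hpos : ∀ y ∈ Set.Ioo (-b) b, 0 < h y := by
    intro y hy
    exact mul_pos hcpos (pow_pos (hcos y hy) 2)
  -- rewrite the function as h ^ q
  have hfun : (fun y : ℝ =>
        ((2 * (n + 1) / (n * (n + 2)) * (Real.cos (n * y / (2 * (n + 1)))) ^ 2)
          ^ (1 / n)) ^ (n + 1)) = fun y => h y ^ q := by
    funext y
    rw [harg y, hq, ← Real.rpow_mul (mul_nonneg hcpos.le (sq_nonneg _))]
  rw [hfun]
  -- derivative of h
  set Dh : ℝ → ℝ := fun y => c * (2 * Real.cos (a * y) * (-Real.sin (a * y) * a)) with hDhdef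
  have hDh : ∀ y : ℝ, HasDerivAt h (Dh y) y := by
    intro y
    have h1 : HasDerivAt (fun y : ℝ => a * y) a y := by
      simpa using (hasDerivAt_id y).const_mul a
    have h2 := h1.cos
    have h3 := h2.pow 2
    have h4 := h3.const_mul c
    have h5 : HasDerivAt h (c * (2 * Real.cos (a * y) ^ (2 - 1) * (-Real.sin (a * y) * a))) y := h4
    convert h5 using 1
    simp only [hDhdef, pow_one]
    ring
  -- first derivative of F
  have hF1 : ∀ y ∈ Set.Ioo (-b) b,
      HasDerivAt (fun y => h y ^ q) (Dh y * q * h y ^ (q - 1)) y := by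
    intro y hy
    exact (hDh y).rpow_const (Or.inl (ne_of_gt (hpos y hy)))
  have hev : deriv (fun y => h y ^ q) =ᶠ[nhds x] fun y => Dh y * q * h y ^ (q - 1) := by
    filter_upwards [isOpen_Ioo.mem_nhds hxmem] with y hy
    exact (hF1 y hy).deriv
  rw [hev.deriv_eq]
  -- second derivative
  have h1 : HasDerivAt (fun y : ℝ => a * y) a x := by
    simpa using (hasDerivAt_id x).const_mul a
  have hu := h1.cos
  have hv : HasDerivAt (fun y => -Real.sin (a * y) * a) (-(Real.cos (a * x) * a) * a) x :=
    h1.sin.neg.mul_const a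
  have hDDh : HasDerivAt Dh
      (c * (2 * (-Real.sin (a * x) * a) * (-Real.sin (a * x) * a)
        + 2 * Real.cos (a * x) * (-(Real.cos (a * x) * a) * a))) x :=
    ((hu.const_mul 2).mul hv).const_mul c
  have hrpow' : HasDerivAt (fun y => h y ^ (q - 1)) (Dh x * (q - 1) * h x ^ (q - 1 - 1)) x :=
    (hDh x).rpow_const (Or.inl (ne_of_gt (hpos x hxmem)))
  have hG : HasDerivAt (fun y => Dh y * q * h y ^ (q - 1))
      ((c * (2 * (-Real.sin (a * x) * a) * (-Real.sin (a * x) * a)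
        + 2 * Real.cos (a * x) * (-(Real.cos (a * x) * a) * a)) * q) * h x ^ (q - 1)
        + (Dh x * q) * (Dh x * (q - 1) * h x ^ (q - 1 - 1))) x :=
    (hDDh.mul_const q).mul hrpow'
  rw [hG.deriv]
  -- algebra
  have hcx := hcos x hxmem
  have hHpos : 0 < c * Real.cos (a * x) ^ 2 := mul_pos hcpos (pow_pos hcx 2)
  have hq1 : q - 1 = 1 / n := by rw [hq]; field_simp; ring
  have hq2 : q - 1 - 1 = 1 / n - 1 := by rw [hq1]
  have hq3 : q = 1 / n + 1 := by rw [hq]; field_simp; ring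
  simp only [hh, hDhdef]
  rw [hq1,
    ← Real.rpow_mul hHpos.le,
    show 1 / n * (n + 1) = 1 / n + 1 by field_simp; ring,
    Real.rpow_add hHpos, Real.rpow_one]
  set P : ℝ := (c * Real.cos (a * x) ^ 2) ^ (1 / n) with hP
  set co := Real.cos (a * x) with hco
  set s := Real.sin (a * x) with hs0
  have hs : s ^ 2 = 1 - co ^ 2 := by
    have := Real.sin_sq_add_cos_sq (a * x); rw [← hco, ← hs0] at this; linarith
  have key : (c * (2 * (-s * a) * (-s * a) + 2 * co * (-(co * a) * a)) * q) * (c * co ^ 2)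
      + (c * (2 * co * (-s * a)) * q) * (c * (2 * co * (-s * a)) * (1 / n))
      + (c * co ^ 2) ^ 2 = 1 / n * (c * co ^ 2) := by
    rw [hq, ha, hc]
    have hco2 : co ^ 2 = 1 - s ^ 2 := by linarith
    field_simp
    ring_nf
    rw [hs]
    ring
  have hE : (c * co ^ 2) ^ (1 / n - 1) * (c * co ^ 2) = P := by
    have h2 := (Real.rpow_add hHpos (1 / n - 1) 1).symm
    rw [Real.rpow_one] at h2
    rw [hP]
    convert h2 using 2
    ring
  linear_combination ((c * co ^ 2) ^ (1 / n - 1)) * key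
    - (c * (2 * (-s * a) * (-s * a) + 2 * co * (-(co * a) * a)) * q + c * co ^ 2 - 1 / n) * hE
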